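/- (Proposition 3) Let L > 0, k_x, k_ẋ > 0, and let y_d : [0,∞) → ℝ³ be a twice differentiable desired trajectory with ‖y_d(t)‖ ≤ r for all t ≥ 0, for some r < L. Let x : [0,∞) → ℝ³ be twice differentiable, set e_x = x − y_d, and suppose the closed-loop (feedback-linearized) error dynamics ë_x(t) = −k_x e_x(t) − k_ẋ ė_x(t) holds for all t ≥ 0 and that x(0) = y_d(0) (so e_x(0) = 0). If the gain k_x satisfies ‖ė_x(0)‖/√k_x < L − r, then (i) ‖x(t)‖ < L for all t ≥ 0, i.e., x(t) remains in the domain D_x = { x ∈ ℝ³ : ‖x‖ < L }; and (ii) (e_x, ė_x) = (0,0) is exponentially stable: there exist C, γ > 0 with ‖e_x(t)‖ + ‖ė_x(t)‖ ≤ C e^{−γ t}(‖e_x(0)‖ + ‖ė_x(0)‖) for all t ≥ 0. -/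

import Mathlib

set_option maxHeartbeats 1000000


noncomputable section

open scoped BigOperators

/-- ℝ³ as `Fin 3 → ℝ`. -/
abbrev V3 : Type := Fin 3 → ℝ

/-- Euclidean inner product on ℝ³. -/
def dot3 (a b : V3) : ℝ := ∑ i, a i * b i

/-- Euclidean norm on ℝ³. -/
def norm3 (a : V3) : ℝ := Real.sqrt (dot3 a a)

/-- Cross product on ℝ³. -/
def cross3 (a b : V3) : V3 :=
  ![a 1 * b 2 - a 2 * b 1, a 2 * b 0 - a 0 * b 2, a 0 * b 1 - a 1 * b 0]

/-- The third standard basis vector. -/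
def e3 : V3 := ![0, 0, 1]

lemma dot3_self_nonneg (a : V3) : 0 ≤ dot3 a a :=
  Finset.sum_nonneg fun _ _ => mul_self_nonneg _

lemma dot3_comm (a b : V3) : dot3 a b = dot3 b a := by
  simp [dot3, mul_comm]

lemma dot3_sq_le (a b : V3) : dot3 a b ^ 2 ≤ dot3 a a * dot3 b b := by
  have h := Finset.sum_mul_sq_le_sq_mul_sq Finset.univ a b
  simpa [dot3, sq] using h

lemma abs_dot3_le (a b : V3) :
    |dot3 a b| ≤ Real.sqrt (dot3 a a) * Real.sqrt (dot3 b b) := by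
  rw [← Real.sqrt_sq_eq_abs, ← Real.sqrt_mul (dot3_self_nonneg a)]
  exact Real.sqrt_le_sqrt (dot3_sq_le a b)

lemma norm3_add_le (a b : V3) : norm3 (a + b) ≤ norm3 a + norm3 b := by
  unfold norm3
  have hab := (le_abs_self (dot3 a b)).trans (abs_dot3_le a b)
  have ha := Real.sq_sqrt (dot3_self_nonneg a)
  have hb := Real.sq_sqrt (dot3_self_nonneg b)
  have hexp : dot3 (a + b) (a + b) = dot3 a a + 2 * dot3 a b + dot3 b b := by
    simp only [dot3, Fin.sum_univ_three, Pi.add_apply]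
    ring
  have h1 : dot3 (a + b) (a + b)
      ≤ (Real.sqrt (dot3 a a) + Real.sqrt (dot3 b b)) ^ 2 := by
    nlinarith [Real.sqrt_nonneg (dot3 a a), Real.sqrt_nonneg (dot3 b b)]
  calc Real.sqrt (dot3 (a + b) (a + b))
      ≤ Real.sqrt ((Real.sqrt (dot3 a a) + Real.sqrt (dot3 b b)) ^ 2) :=
        Real.sqrt_le_sqrt h1
    _ = Real.sqrt (dot3 a a) + Real.sqrt (dot3 b b) := by
        exact Real.sqrt_sq (by positivity)

lemma hasDerivAt_dot3 {f g : ℝ → V3} {f' g' : V3} {t : ℝ}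
    (hf : HasDerivAt f f' t) (hg : HasDerivAt g g' t) :
    HasDerivAt (fun s => dot3 (f s) (g s)) (dot3 f' (g t) + dot3 (f t) g') t := by
  have hfi : ∀ i, HasDerivAt (fun s => f s i) (f' i) t := hasDerivAt_pi.mp hf
  have hgi : ∀ i, HasDerivAt (fun s => g s i) (g' i) t := hasDerivAt_pi.mp hg
  have h : HasDerivAt (fun s => ∑ i, f s i * g s i)
      (∑ i : Fin 3, (f' i * g t i + f t i * g' i)) t :=
    HasDerivAt.fun_sum fun i _ => (hfi i).mul (hgi i)
  simpa [dot3, Finset.sum_add_distrib] using h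

/-- Proposition 3: for the feedback-linearized position tracking
error dynamics `ë_x = −k_x e_x − k_ẋ ė_x` with `x(0) = y_d(0)` and
`‖y_d(t)‖ ≤ r < L`, if the gain satisfies `‖ė_x(0)‖/√k_x < L − r` then the
quadrotor position stays in `D_x = {x : ‖x‖ < L}` for all `t ≥ 0`, and the
zero equilibrium of `(e_x, ė_x)` is exponentially stable. -/
theorem prop3_position_tracking (L r kx kx' : ℝ)
    (hL : 0 < L) (hr : r < L) (hkx : 0 < kx) (hkx' : 0 < kx')
    (yd x : ℝ → V3)
    (hyd : Differentiable ℝ yd) (hyd' : Differentiable ℝ (deriv yd))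
    (hx : Differentiable ℝ x) (hx' : Differentiable ℝ (deriv x))
    (hydbound : ∀ t : ℝ, 0 ≤ t → norm3 (yd t) ≤ r)
    (hode : ∀ t : ℝ, 0 ≤ t →
      deriv (deriv (fun s => x s - yd s)) t
        = (-kx) • (x t - yd t) + (-kx') • deriv (fun s => x s - yd s) t)
    (hinit : x 0 = yd 0)
    (hgain : norm3 (deriv (fun s => x s - yd s) 0) / Real.sqrt kx < L - r) :
    (∀ t : ℝ, 0 ≤ t → norm3 (x t) < L) ∧
    ∃ C γ : ℝ, 0 < C ∧ 0 < γ ∧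
      ∀ t : ℝ, 0 ≤ t →
        norm3 (x t - yd t) + norm3 (deriv (fun s => x s - yd s) t)
          ≤ C * Real.exp (-γ * t)
              * (norm3 (x 0 - yd 0) + norm3 (deriv (fun s => x s - yd s) 0)) := by
  -- Setup: the error function and its derivatives
  set e : ℝ → V3 := fun s => x s - yd s with he_def
  have hxsub : ∀ t, x t - yd t = e t := fun t => by rw [he_def]
  have he : Differentiable ℝ e := hx.sub hyd
  set e' : ℝ → V3 := deriv e with he'_def
  have hderiv_e : ∀ t, HasDerivAt e (e' t) t := fun t => (he t).hasDerivAt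
  have he'eq : e' = fun t => deriv x t - deriv yd t := by
    rw [he'_def, he_def]
    exact funext fun t => deriv_sub (hx t) (hyd t)
  have he' : Differentiable ℝ e' := by rw [he'eq]; exact hx'.sub hyd'
  have hderiv_e' : ∀ t, HasDerivAt e' (deriv e' t) t := fun t => (he' t).hasDerivAt
  have he0 : e 0 = 0 := by rw [he_def]; simp [hinit]
  -- scalar quantities
  set a : ℝ → ℝ := fun t => dot3 (e t) (e t) with ha_def
  set b : ℝ → ℝ := fun t => dot3 (e t) (e' t) with hb_def
  set c : ℝ → ℝ := fun t => dot3 (e' t) (e' t) with hc_def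
  have ha_nonneg : ∀ t, 0 ≤ a t := fun t => dot3_self_nonneg _
  have hc_nonneg : ∀ t, 0 ≤ c t := fun t => dot3_self_nonneg _
  have ha0 : a 0 = 0 := by rw [ha_def]; simp [he0, dot3]
  have hb0 : b 0 = 0 := by rw [hb_def]; simp [he0, dot3]
  have hA : ∀ t, HasDerivAt a (2 * b t) t := by
    intro t
    have h := hasDerivAt_dot3 (hderiv_e t) (hderiv_e t)
    have : dot3 (e' t) (e t) + dot3 (e t) (e' t) = 2 * b t := by
      rw [hb_def, dot3_comm]; ring
    rw [ha_def]; rw [← this]; exact h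
  have hB : ∀ t, HasDerivAt b (c t + dot3 (e t) (deriv e' t)) t := by
    intro t
    have h := hasDerivAt_dot3 (hderiv_e t) (hderiv_e' t)
    have : dot3 (e' t) (e' t) + dot3 (e t) (deriv e' t)
        = c t + dot3 (e t) (deriv e' t) := by rw [hc_def]
    rw [hb_def]; rw [← this]; exact h
  have hC : ∀ t, HasDerivAt c (2 * dot3 (e' t) (deriv e' t)) t := by
    intro t
    have h := hasDerivAt_dot3 (hderiv_e' t) (hderiv_e' t)
    have : dot3 (deriv e' t) (e' t) + dot3 (e' t) (deriv e' t)
        = 2 * dot3 (e' t) (deriv e' t) := by rw [dot3_comm (deriv e' t)]; ring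
    rw [hc_def]; rw [← this]; exact h
  -- the ODE in terms of dot products
  have hdot_ode : ∀ (u : V3) (t : ℝ), 0 ≤ t →
      dot3 u (deriv e' t) = -kx * dot3 u (e t) - kx' * dot3 u (e' t) := by
    intro u t ht
    have h := hode t ht
    rw [hxsub t] at h
    rw [h]
    simp only [dot3, Fin.sum_univ_three, Pi.add_apply, Pi.smul_apply, smul_eq_mul]
    ring
  -- Cauchy-Schwarz for b
  have hb_cs : ∀ t, |b t| ≤ Real.sqrt (a t) * Real.sqrt (c t) := by
    intro t
    rw [ha_def, hb_def, hc_def]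
    exact abs_dot3_le (e t) (e' t)
  -- Part (i): the energy V = kx * a + c is nonincreasing
  set V : ℝ → ℝ := fun t => kx * a t + c t with hV_def
  have hVd : ∀ t, HasDerivAt V (kx * (2 * b t) + 2 * dot3 (e' t) (deriv e' t)) t := by
    intro t
    have := ((hA t).const_mul kx).add (hC t)
    rw [hV_def]; exact this
  have hVanti : AntitoneOn V (Set.Ici 0) := by
    apply antitoneOn_of_deriv_nonpos (convex_Ici 0)
    · exact (Differentiable.continuous fun t => (hVd t).differentiableAt).continuousOn
    · exact fun t _ => ((hVd t).differentiableAt).differentiableWithinAt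
    · intro t ht
      rw [interior_Ici] at ht
      rw [(hVd t).deriv]
      rw [hdot_ode (e' t) t ht.le]
      have h1 : dot3 (e' t) (e t) = b t := by rw [hb_def, dot3_comm]
      have h2 : dot3 (e' t) (e' t) = c t := by rw [hc_def]
      rw [h1, h2]
      nlinarith [hc_nonneg t, hkx'.le, mul_nonneg hkx'.le (hc_nonneg t)]
  have hVbound : ∀ t, 0 ≤ t → V t ≤ c 0 := by
    intro t ht
    have h := hVanti Set.self_mem_Ici ht ht
    simp only [hV_def, ha0] at h ⊢
    linarith
  have hsqA : ∀ t, 0 ≤ t → Real.sqrt (a t) ≤ Real.sqrt (c 0) / Real.sqrt kx := by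
    intro t ht
    have h1 : kx * a t ≤ c 0 := by
      have h := hVbound t ht
      simp only [hV_def] at h
      nlinarith [hc_nonneg t]
    have h2 : a t ≤ c 0 / kx := by
      rw [le_div_iff₀ hkx]; linarith [h1]
    calc Real.sqrt (a t) ≤ Real.sqrt (c 0 / kx) := Real.sqrt_le_sqrt h2
      _ = Real.sqrt (c 0) / Real.sqrt kx := Real.sqrt_div (hc_nonneg 0) kx
  have hnorm3e : ∀ t, norm3 (e t) = Real.sqrt (a t) := fun t => by
    rw [norm3, ha_def]
  have hnorm3e' : ∀ t, norm3 (e' t) = Real.sqrt (c t) := fun t => by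
    rw [norm3, hc_def]
  clear_value e e' a b c V
  constructor
  · -- part (i)
    intro t ht
    have hx_eq : x t = e t + yd t := by rw [he_def]; simp
    rw [hx_eq]
    have h1 := norm3_add_le (e t) (yd t)
    have h2 := hydbound t ht
    have h3 : norm3 (e t) ≤ Real.sqrt (c 0) / Real.sqrt kx := by
      rw [hnorm3e]; exact hsqA t ht
    have h4 : norm3 (e' 0) / Real.sqrt kx < L - r := hgain
    rw [hnorm3e'] at h4
    linarith
  · -- part (ii): exponential stability via the Lyapunov function W
    set ε : ℝ := min (min kx' (kx / kx')) (Real.sqrt kx) with hε_def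
    have hεpos : 0 < ε :=
      lt_min (lt_min hkx' (div_pos hkx hkx')) (Real.sqrt_pos.2 hkx)
    have hε1 : ε ≤ kx' := (min_le_left _ _).trans (min_le_left _ _)
    have hε2 : ε * kx' ≤ kx := by
      have h : ε ≤ kx / kx' :=
        (min_le_left (min kx' (kx / kx')) (Real.sqrt kx)).trans
          (min_le_right kx' (kx / kx'))
      rw [← le_div_iff₀ hkx']; exact h
    have hε3 : ε ≤ Real.sqrt kx := min_le_right _ _
    set γ : ℝ := ε / 2 with hγ_def
    have hγpos : 0 < γ := by rw [hγ_def]; linarith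
    clear_value ε γ
    set W : ℝ → ℝ := fun t => kx * a t + c t + ε * b t with hW_def
    have hWd : ∀ t, HasDerivAt W
        (kx * (2 * b t) + 2 * dot3 (e' t) (deriv e' t)
          + ε * (c t + dot3 (e t) (deriv e' t))) t := by
      intro t
      have := (((hA t).const_mul kx).add (hC t)).add ((hB t).const_mul ε)
      rw [hW_def]; exact this
    -- W is comparable to kx*a + c
    have hW_comp : ∀ t, ε * |b t| ≤ (kx * a t + c t) / 2 := by
      intro t
      have hcs := hb_cs t
      set sA := Real.sqrt (a t) with hsA_def
      set sC := Real.sqrt (c t) with hsC_def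
      have hsA2 : sA ^ 2 = a t := Real.sq_sqrt (ha_nonneg t)
      have hsC2 : sC ^ 2 = c t := Real.sq_sqrt (hc_nonneg t)
      have hsA0 : 0 ≤ sA := Real.sqrt_nonneg _
      have hsC0 : 0 ≤ sC := Real.sqrt_nonneg _
      clear_value sA sC
      have hk2 : Real.sqrt kx ^ 2 = kx := Real.sq_sqrt hkx.le
      have habs : 0 ≤ |b t| := abs_nonneg _
      nlinarith [sq_nonneg (Real.sqrt kx * sA - sC), Real.sqrt_nonneg kx,
        mul_le_mul_of_nonneg_right hε3 (mul_nonneg hsA0 hsC0),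
        mul_le_mul_of_nonneg_left hcs hεpos.le]
    have hW_lower : ∀ t, (kx * a t + c t) / 2 ≤ W t := by
      intro t
      have h := hW_comp t
      have := neg_abs_le (b t)
      rw [hW_def]
      nlinarith [abs_nonneg (b t)]
    have hW0 : W 0 = c 0 := by rw [hW_def]; simp [ha0, hb0]
    clear_value W
    -- g = W * exp(γ t) is nonincreasing on [0, ∞)
    set g : ℝ → ℝ := fun t => W t * Real.exp (γ * t) with hg_def
    have hEd : ∀ t : ℝ, HasDerivAt (fun s => Real.exp (γ * s))
        (Real.exp (γ * t) * γ) t := by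
      intro t
      simpa using ((hasDerivAt_id t).const_mul γ).exp
    have hgd : ∀ t, HasDerivAt g
        ((kx * (2 * b t) + 2 * dot3 (e' t) (deriv e' t)
          + ε * (c t + dot3 (e t) (deriv e' t))) * Real.exp (γ * t)
          + W t * (Real.exp (γ * t) * γ)) t := by
      intro t
      have := (hWd t).mul (hEd t)
      rw [hg_def]; exact this
    clear_value g
    have hganti : AntitoneOn g (Set.Ici 0) := by
      apply antitoneOn_of_deriv_nonpos (convex_Ici 0)
      · exact (Differentiable.continuous fun t => (hgd t).differentiableAt).continuousOn
      · exact fun t _ => ((hgd t).differentiableAt).differentiableWithinAt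
      · intro t ht
        rw [interior_Ici] at ht
        rw [(hgd t).deriv]
        rw [hdot_ode (e' t) t ht.le, hdot_ode (e t) t ht.le]
        have h1 : dot3 (e' t) (e t) = b t := by rw [hb_def, dot3_comm]
        have h2 : dot3 (e' t) (e' t) = c t := by rw [hc_def]
        have h3 : dot3 (e t) (e t) = a t := by rw [ha_def]
        have h4 : dot3 (e t) (e' t) = b t := by rw [hb_def]
        rw [h1, h2, h3, h4]
        have hexp_pos : (0:ℝ) < Real.exp (γ * t) := Real.exp_pos _
        have hcore : kx * (2 * b t) + 2 * (-kx * b t - kx' * c t)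
            + ε * (c t + (-kx * a t - kx' * b t))
            + W t * γ ≤ 0 := by
          simp only [hW_def, hγ_def]
          have hcs := hb_cs t
          set sA := Real.sqrt (a t) with hsA_def
          set sC := Real.sqrt (c t) with hsC_def
          have hsA2 : sA ^ 2 = a t := Real.sq_sqrt (ha_nonneg t)
          have hsC2 : sC ^ 2 = c t := Real.sq_sqrt (hc_nonneg t)
          have hsA0 : 0 ≤ sA := Real.sqrt_nonneg _
          have hsC0 : 0 ≤ sC := Real.sqrt_nonneg _
          clear_value sA sC
          have hbl : -(sA * sC) ≤ b t := neg_le_of_abs_le hcs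
          have hhalf : (0:ℝ) ≤ kx' - ε / 2 := by linarith
          have H1 : (0:ℝ) ≤ kx' * (ε * sA - sC) ^ 2 :=
            mul_nonneg hkx'.le (sq_nonneg _)
          have H2 : (0:ℝ) ≤ ε * ((kx - ε * kx') * sA ^ 2) :=
            mul_nonneg hεpos.le (mul_nonneg (sub_nonneg.2 hε2) (sq_nonneg _))
          have H3 : (0:ℝ) ≤ ε ^ 2 * (sA * sC) :=
            mul_nonneg (sq_nonneg _) (mul_nonneg hsA0 hsC0)
          have H4 : (0:ℝ) ≤ (kx' - ε) * sC ^ 2 :=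
            mul_nonneg (sub_nonneg.2 hε1) (sq_nonneg _)
          have H5 : (0:ℝ) ≤ ε * (kx' - ε / 2) * (b t + sA * sC) :=
            mul_nonneg (mul_nonneg hεpos.le hhalf) (by linarith)
          rw [← hsA2, ← hsC2]
          nlinarith [H1, H2, H3, H4, H5]
        calc (kx * (2 * b t) + 2 * (-kx * b t - kx' * c t)
            + ε * (c t + (-kx * a t - kx' * b t))) * Real.exp (γ * t)
            + W t * (Real.exp (γ * t) * γ)
            = (kx * (2 * b t) + 2 * (-kx * b t - kx' * c t)
              + ε * (c t + (-kx * a t - kx' * b t)) + W t * γ)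
              * Real.exp (γ * t) := by ring
          _ ≤ 0 := mul_nonpos_of_nonpos_of_nonneg hcore hexp_pos.le
    -- hence W t ≤ c 0 * exp(-γ t) for t ≥ 0
    have hWbound : ∀ t, 0 ≤ t → W t ≤ c 0 * Real.exp (-γ * t) := by
      intro t ht
      have h := hganti Set.self_mem_Ici ht ht
      simp only [hg_def, mul_zero, Real.exp_zero, mul_one] at h
      rw [hW0] at h
      have hexp_pos : (0:ℝ) < Real.exp (γ * t) := Real.exp_pos _
      rw [neg_mul, Real.exp_neg]
      calc W t = W t * Real.exp (γ * t) * (Real.exp (γ * t))⁻¹ := by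
            field_simp
        _ ≤ c 0 * (Real.exp (γ * t))⁻¹ :=
            mul_le_mul_of_nonneg_right h (inv_nonneg.2 hexp_pos.le)
    refine ⟨Real.sqrt (2 / kx) + Real.sqrt 2, γ / 2, by positivity, by linarith, ?_⟩
    intro t ht
    rw [hxsub t, hxsub 0]
    -- the statement's deriv terms are e' up to the `set` rewrites; they were rewritten
    rw [hnorm3e, hnorm3e', hnorm3e, hnorm3e']
    rw [ha0, Real.sqrt_zero, zero_add]
    -- bounds on a t and c t
    have hWb := hWbound t ht
    have hWl := hW_lower t
    have hkey : kx * a t + c t ≤ 2 * (c 0 * Real.exp (-γ * t)) := by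
      nlinarith [hWb, hWl]
    have hE0 : (0:ℝ) ≤ Real.exp (-γ * t) := (Real.exp_pos _).le
    have hsqrtE : Real.sqrt (Real.exp (-γ * t)) = Real.exp (-(γ / 2) * t) := by
      rw [show -γ * t = -(γ / 2) * t + -(γ / 2) * t by ring, Real.exp_add,
        Real.sqrt_mul_self (Real.exp_nonneg _)]
    have hat : a t ≤ 2 / kx * (c 0 * Real.exp (-γ * t)) := by
      rw [div_mul_eq_mul_div, le_div_iff₀ hkx]
      nlinarith [hc_nonneg t]
    have hct : c t ≤ 2 * (c 0 * Real.exp (-γ * t)) := by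
      nlinarith [mul_nonneg hkx.le (ha_nonneg t)]
    have h1 : Real.sqrt (a t)
        ≤ Real.sqrt (2 / kx) * (Real.sqrt (c 0) * Real.exp (-(γ / 2) * t)) := by
      calc Real.sqrt (a t) ≤ Real.sqrt (2 / kx * (c 0 * Real.exp (-γ * t))) :=
            Real.sqrt_le_sqrt hat
        _ = Real.sqrt (2 / kx) * (Real.sqrt (c 0) * Real.exp (-(γ / 2) * t)) := by
            rw [Real.sqrt_mul (by positivity), Real.sqrt_mul (hc_nonneg 0), hsqrtE]
    have h2 : Real.sqrt (c t)
        ≤ Real.sqrt 2 * (Real.sqrt (c 0) * Real.exp (-(γ / 2) * t)) := by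
      calc Real.sqrt (c t) ≤ Real.sqrt (2 * (c 0 * Real.exp (-γ * t))) :=
            Real.sqrt_le_sqrt hct
        _ = Real.sqrt 2 * (Real.sqrt (c 0) * Real.exp (-(γ / 2) * t)) := by
            rw [Real.sqrt_mul (by norm_num), Real.sqrt_mul (hc_nonneg 0), hsqrtE]
    calc Real.sqrt (a t) + Real.sqrt (c t)
        ≤ Real.sqrt (2 / kx) * (Real.sqrt (c 0) * Real.exp (-(γ / 2) * t))
          + Real.sqrt 2 * (Real.sqrt (c 0) * Real.exp (-(γ / 2) * t)) :=
          add_le_add h1 h2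
      _ = (Real.sqrt (2 / kx) + Real.sqrt 2) * Real.exp (-(γ / 2) * t)
          * Real.sqrt (c 0) := by ring
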